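/- Let S be the smallest set of pairs of integers that contains (2,1) and is closed under the three maps (m,n) ↦ (2m+n, m), (m,n) ↦ (2n+m, n), and (m,n) ↦ (2m-n, m). If m and n are integers of opposite parity (m + n odd) with m > n ≥ 1 and gcd(m,n) = 1, then (m,n) ∈ S. -/

import Mathlib

lemma tree21_gcd1 {m n : ℤ} (h : Int.gcd m n = 1) : Int.gcd n (2*n - m) = 1 := by
  rw [← Int.isCoprime_iff_gcd_eq_one] at h ⊢
  have := (h.symm.neg_right).add_mul_left_right 2
  rw [show (2:ℤ)*n - m = -m + n*2 by ring]; exact this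

lemma tree21_gcd2 {m n : ℤ} (h : Int.gcd m n = 1) : Int.gcd (m - 2*n) n = 1 := by
  rw [← Int.isCoprime_iff_gcd_eq_one] at h ⊢
  have he : m - 2*n = m + (-2) * n := by ring
  rw [he]; exact h.add_mul_right_left (-2)

theorem tree21_complete (S : Set (ℤ × ℤ))
    (hS : S = ⋂₀ {T : Set (ℤ × ℤ) | ((2 : ℤ), (1 : ℤ)) ∈ T ∧
      ∀ m n : ℤ, (m, n) ∈ T →
        (2 * m + n, m) ∈ T ∧ (2 * n + m, n) ∈ T ∧ (2 * m - n, m) ∈ T})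
    (m n : ℤ) (hpar : Odd (m + n))
    (hmn : m > n) (hn : n ≥ 1) (hgcd : Int.gcd m n = 1) :
    (m, n) ∈ S := by
  subst hS
  rintro T ⟨hbase, hstep⟩
  suffices H : ∀ k : ℕ, ∀ m n : ℤ, m.toNat ≤ k → Odd (m + n) → m > n → n ≥ 1 →
      Int.gcd m n = 1 → (m, n) ∈ T by
    exact H m.toNat m n le_rfl hpar hmn hn hgcd
  intro k
  induction k with
  | zero => intro m n hk _ hmn hn _; omega
  | succ k ih =>
    intro m n hk hpar hmn hn hgcd
    rw [Int.odd_iff] at hpar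
    have hndvd : m = 2*n ∨ m = 3*n → n = 1 := by
      intro h
      have h1 : n ∣ m := by
        rcases h with h | h
        · exact ⟨2, by omega⟩
        · exact ⟨3, by omega⟩
      have h2 : n ∣ (Int.gcd m n : ℤ) := Int.dvd_coe_gcd h1 dvd_rfl
      rw [hgcd] at h2
      exact Int.eq_one_of_dvd_one (by omega) (by exact_mod_cast h2)
    rcases lt_trichotomy m (2*n) with h1 | h1 | h1
    · -- parent (n, 2n-m)
      have hp : (n, 2*n - m) ∈ T := by
        apply ih n (2*n - m) (by omega) (by rw [Int.odd_iff]; omega) (by omega) (by omega)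
          (tree21_gcd1 hgcd)
      have := (hstep n (2*n - m) hp).2.2
      have he : 2*n - (2*n - m) = m := by ring
      rwa [he] at this
    · -- m = 2n : gcd forces n = 1
      have hn1 : n = 1 := hndvd (Or.inl h1)
      have : m = 2 := by omega
      rw [this, hn1]; exact hbase
    · rcases lt_trichotomy m (3*n) with h2 | h2 | h2
      · -- parent (n, m - 2n)
        have hp : (n, m - 2*n) ∈ T := by
          apply ih n (m - 2*n) (by omega) (by rw [Int.odd_iff]; omega) (by omega) (by omega)
          have := tree21_gcd2 hgcd
          rwa [Int.gcd_comm] at this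
        have := (hstep n (m - 2*n) hp).1
        have he : 2*n + (m - 2*n) = m := by ring
        rwa [he] at this
      · -- m = 3n impossible by parity
        have hn1 : n = 1 := hndvd (Or.inr h2)
        omega
      · -- parent (m - 2n, n)
        have hp : (m - 2*n, n) ∈ T := by
          apply ih (m - 2*n) n (by omega) (by rw [Int.odd_iff]; omega) (by omega) hn
            (tree21_gcd2 hgcd)
        have := (hstep (m - 2*n) n hp).2.1
        have he : 2*n + (m - 2*n) = m := by ring
        rwa [he] at this
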